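/- Chernoff–Hoeffding tail bound for the binomial distribution with a shifted threshold: let N ≥ 1 be a natural number, let p ∈ [0,1], and let t be a real number with t ≥ p·N. Then the probability that a binomial random variable X ~ Bin(N, p) satisfies X ≥ t is at most exp(−2(t − pN)²/N); that is, ∑_{k ∈ {0,…,N}, (k:ℝ) ≥ t} Bin(N,p)(k) ≤ exp(−2(t − pN)²/N). -/

import Mathlib

open Real Finset

lemma hoeffding_lemma (p : ℝ) (hp0 : 0 ≤ p) (hp1 : p ≤ 1) (l : ℝ) (hl : 0 ≤ l) :
    1 - p + p * Real.exp l ≤ Real.exp (l * p + l ^ 2 / 8) := by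
  set D : ℝ → ℝ := fun x => 1 - p + p * Real.exp x with hD_def
  have hD : ∀ x, 0 < D x := by
    intro x
    rcases eq_or_lt_of_le hp0 with h | h
    · simp [hD_def, ← h]
    · have : 0 < p * Real.exp x := mul_pos h (Real.exp_pos x)
      have : 0 ≤ 1 - p := by linarith
      simp only [hD_def]
      nlinarith [Real.exp_pos x]
  have hDderiv : ∀ x, HasDerivAt D (p * Real.exp x) x := by
    intro x
    exact ((Real.hasDerivAt_exp x).const_mul p).const_add (1 - p)
  set g : ℝ → ℝ := fun x => p + x / 4 - p * Real.exp x / D x with hg_def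
  have hgderiv : ∀ x, HasDerivAt g
      (1 / 4 - (p * Real.exp x * D x - p * Real.exp x * (p * Real.exp x)) / D x ^ 2) x := by
    intro x
    have h1 : HasDerivAt (fun x : ℝ => p + x / 4) (1 / 4) x := by
      simpa using ((hasDerivAt_id x).div_const 4).const_add p
    have h2 : HasDerivAt (fun x => p * Real.exp x / D x)
        ((p * Real.exp x * D x - p * Real.exp x * (p * Real.exp x)) / D x ^ 2) x :=
      ((Real.hasDerivAt_exp x).const_mul p).div (hDderiv x) (ne_of_gt (hD x))
    exact h1.sub h2
  have hg'nonneg : ∀ x, 0 ≤ 1 / 4 - (p * Real.exp x * D x - p * Real.exp x * (p * Real.exp x)) / D x ^ 2 := by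
    intro x
    rw [sub_nonneg, div_le_iff₀ (pow_pos (hD x) 2)]
    have hex : 0 < Real.exp x := Real.exp_pos x
    simp only [hD_def]
    nlinarith [sq_nonneg (1 - p - p * Real.exp x), mul_nonneg hp0 hex.le]
  have hgmono : Monotone g := by
    apply monotone_of_deriv_nonneg
    · exact fun x => (hgderiv x).differentiableAt
    · intro x
      rw [(hgderiv x).deriv]
      exact hg'nonneg x
  have hg0 : g 0 = 0 := by
    simp [hg_def, hD_def]
  have hgnonneg : ∀ x, 0 ≤ x → 0 ≤ g x := fun x hx => hg0 ▸ hgmono hx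
  set f : ℝ → ℝ := fun x => x * p + x ^ 2 / 8 - Real.log (D x) with hf_def
  have hfderiv : ∀ x, HasDerivAt f (g x) x := by
    intro x
    have h1 : HasDerivAt (fun x : ℝ => x * p + x ^ 2 / 8) (p + x / 4) x := by
      have := ((hasDerivAt_pow 2 x).div_const 8).const_add 0
      have h2 := ((hasDerivAt_id x).mul_const p).add ((hasDerivAt_pow 2 x).div_const 8)
      exact h2.congr_deriv (by norm_num; ring)
    have h3 : HasDerivAt (fun x => Real.log (D x)) (p * Real.exp x / D x) x :=
      (hDderiv x).log (ne_of_gt (hD x))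
    exact h1.sub h3
  have hfmono : MonotoneOn f (Set.Ici 0) := by
    apply monotoneOn_of_deriv_nonneg (convex_Ici 0)
    · exact (Continuous.continuousOn (by
        fun_prop (disch := exact fun x => ne_of_gt (hD x))) : ContinuousOn f _)
    · intro x _
      exact (hfderiv x).differentiableAt.differentiableWithinAt
    · intro x hx
      rw [(hfderiv x).deriv]
      exact hgnonneg x (le_of_lt (by simpa using hx))
  have hf0 : f 0 = 0 := by simp [hf_def, hD_def]
  have hfl : 0 ≤ f l := hf0 ▸ hfmono (Set.self_mem_Ici) hl hl
  have : Real.log (D l) ≤ l * p + l ^ 2 / 8 := by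
    simp only [hf_def] at hfl; linarith
  exact (Real.log_le_iff_le_exp (hD l)).mp this

/-- Chernoff–Hoeffding tail bound for the binomial distribution with a shifted
threshold: for `N ≥ 1` trials with success probability `p ∈ [0,1]` and a threshold
`t ≥ pN`, the probability that a binomial random variable is at least `t` is at
most `exp(−2(t − pN)²/N)`. -/
theorem binomial_chernoff_hoeffding (N : ℕ) (hN : 1 ≤ N) (p : ℝ)
    (hp0 : 0 ≤ p) (hp1 : p ≤ 1) (t : ℝ) (ht : p * N ≤ t) :
    ∑ k ∈ (Finset.range (N + 1)).filter (fun k : ℕ => t ≤ (k : ℝ)),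
        (N.choose k : ℝ) * p ^ k * (1 - p) ^ (N - k)
      ≤ Real.exp (-2 * (t - p * N) ^ 2 / N) := by
  have hNpos : (0:ℝ) < N := by exact_mod_cast hN
  set l : ℝ := 4 * (t - p * N) / N with hl_def
  have hs : 0 ≤ t - p * N := by linarith
  have hl : 0 ≤ l := div_nonneg (by linarith) hNpos.le
  have hq : 0 ≤ 1 - p := by linarith
  have ha : ∀ k : ℕ, 0 ≤ (N.choose k : ℝ) * p ^ k * (1 - p) ^ (N - k) := fun k => by positivity
  calc ∑ k ∈ (Finset.range (N + 1)).filter (fun k : ℕ => t ≤ (k : ℝ)),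
        (N.choose k : ℝ) * p ^ k * (1 - p) ^ (N - k)
      ≤ ∑ k ∈ (Finset.range (N + 1)).filter (fun k : ℕ => t ≤ (k : ℝ)),
        (N.choose k : ℝ) * p ^ k * (1 - p) ^ (N - k) * Real.exp (l * (k - t)) := by
        apply Finset.sum_le_sum
        intro k hk
        have htk : t ≤ (k:ℝ) := (Finset.mem_filter.mp hk).2
        have h1 : 1 ≤ Real.exp (l * (k - t)) :=
          Real.one_le_exp (mul_nonneg hl (by linarith))
        nlinarith [ha k]
    _ ≤ ∑ k ∈ Finset.range (N + 1),
        (N.choose k : ℝ) * p ^ k * (1 - p) ^ (N - k) * Real.exp (l * (k - t)) :=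
        Finset.sum_le_sum_of_subset_of_nonneg (Finset.filter_subset _ _)
          (fun k _ _ => mul_nonneg (ha k) (Real.exp_pos _).le)
    _ = Real.exp (-(l * t)) * ∑ k ∈ Finset.range (N + 1),
        (p * Real.exp l) ^ k * (1 - p) ^ (N - k) * (N.choose k : ℝ) := by
        rw [Finset.mul_sum]
        apply Finset.sum_congr rfl
        intro k _
        rw [show l * ((k:ℝ) - t) = (k:ℝ) * l + -(l * t) by ring, Real.exp_add,
          Real.exp_nat_mul, mul_pow]
        ring
    _ = Real.exp (-(l * t)) * (p * Real.exp l + (1 - p)) ^ N := by rw [add_pow]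
    _ ≤ Real.exp (-(l * t)) * Real.exp (l * p + l ^ 2 / 8) ^ N := by
        apply mul_le_mul_of_nonneg_left _ (Real.exp_pos _).le
        apply pow_le_pow_left₀ (by positivity)
        linarith [hoeffding_lemma p hp0 hp1 l hl]
    _ = Real.exp (-(l * t) + N * (l * p + l ^ 2 / 8)) := by
        rw [← Real.exp_nat_mul, ← Real.exp_add]
    _ = Real.exp (-2 * (t - p * N) ^ 2 / N) := by
        congr 1
        rw [hl_def]
        field_simp
        ring
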